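/- Let g, g' : ℝ → ℝ be such that g' is integrable on (0,1), g(x) = g(0) + ∫₀^x g'(t) dt for all x ∈ [0,1], and ∫₀¹ g'(t)² dt < ∞. Then ∫₀¹ ( g(x) − ∫₀¹ g(t) dt )² dx ≤ (1/6) ∫₀¹ g'(t)² dt. -/

import Mathlib

open MeasureTheory

lemma cs_integral {α : Type*} [MeasurableSpace α] {μ : Measure α} (f h : α → ℝ)
    (hfh : Integrable (fun t => f t * h t) μ) (hf2 : Integrable (fun t => f t ^ 2) μ)
    (hh2 : Integrable (fun t => h t ^ 2) μ) :
    (∫ t, f t * h t ∂μ) ^ 2 ≤ (∫ t, f t ^ 2 ∂μ) * (∫ t, h t ^ 2 ∂μ) := by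
  have key : ∀ lam : ℝ,
      0 ≤ (∫ t, h t ^ 2 ∂μ) * (lam * lam) + (-2 * ∫ t, f t * h t ∂μ) * lam + ∫ t, f t ^ 2 ∂μ := by
    intro lam
    have h1 : 0 ≤ ∫ t, (f t - lam * h t) ^ 2 ∂μ := integral_nonneg fun t => sq_nonneg _
    have h2 : ∫ t, (f t - lam * h t) ^ 2 ∂μ
        = (∫ t, h t ^ 2 ∂μ) * (lam * lam) + (-2 * ∫ t, f t * h t ∂μ) * lam
          + ∫ t, f t ^ 2 ∂μ := by
      have hfun : (fun t => (f t - lam * h t) ^ 2)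
          = fun t => ((lam * lam) * h t ^ 2 + (-2 * lam) * (f t * h t)) + f t ^ 2 := by
        funext t; ring
      have i1 : Integrable (fun t => (lam * lam) * h t ^ 2 + (-2 * lam) * (f t * h t)) μ := by
        exact (hh2.const_mul _).add (hfh.const_mul _)
      rw [hfun, integral_add i1 hf2,
        integral_add (hh2.const_mul _) (hfh.const_mul _), MeasureTheory.integral_const_mul, MeasureTheory.integral_const_mul]
      ring
    linarith [h2 ▸ h1]
  have hd := discrim_le_zero key
  rw [discrim] at hd
  nlinarith [hd]

/-- univariate Poincaré-type inequality with constant 1/6.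
If `g` is absolutely continuous on `[0,1]` with derivative `g'` integrable on `(0,1)` and
`∫₀¹ g'(t)² dt < ∞`, then `∫₀¹ (g(x) - ∫₀¹ g(t) dt)² dx ≤ (1/6) ∫₀¹ g'(t)² dt`. -/
theorem stmt15 (g g' : ℝ → ℝ)
    (hint : IntegrableOn g' (Set.Ioo 0 1))
    (hftc : ∀ x ∈ Set.Icc (0 : ℝ) 1, g x = g 0 + ∫ t in (0 : ℝ)..x, g' t)
    (hsq : IntegrableOn (fun t => g' t ^ 2) (Set.Ioo 0 1)) :
    ∫ x in (0 : ℝ)..1, (g x - ∫ t in (0 : ℝ)..1, g t) ^ 2 ≤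
      (1 / 6) * ∫ t in (0 : ℝ)..1, g' t ^ 2 := by
  -- transfer integrability from Ioo to Ioc and Icc
  have hrIoo : (volume : Measure ℝ).restrict (Set.Ioo 0 1) = volume.restrict (Set.Ioc 0 1) :=
    Measure.restrict_congr_set Ioo_ae_eq_Ioc
  have hrIcc : (volume : Measure ℝ).restrict (Set.Icc 0 1) = volume.restrict (Set.Ioc 0 1) :=
    (Measure.restrict_congr_set Ioc_ae_eq_Icc).symm
  have hint' : IntegrableOn g' (Set.Ioc 0 1) := by rwa [IntegrableOn, ← hrIoo]
  have hintIcc : IntegrableOn g' (Set.Icc 0 1) := by rwa [IntegrableOn, hrIcc, ← hrIoo]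
  have hsq' : IntegrableOn (fun t => g' t ^ 2) (Set.Ioc 0 1) := by rwa [IntegrableOn, ← hrIoo]
  set μ := (volume : Measure ℝ).restrict (Set.Ioc 0 1) with hμdef
  have hg'm : AEStronglyMeasurable g' μ := hint'.1
  set C := ∫ t in Set.Ioc (0:ℝ) 1, g' t ^ 2 with hCdef
  have hC0 : 0 ≤ C := setIntegral_nonneg measurableSet_Ioc fun t _ => sq_nonneg _
  -- the primitive
  set F : ℝ → ℝ := fun x => ∫ t in Set.Ioc (0:ℝ) x, g' t with hFdef
  have hFcont : ContinuousOn F (Set.Icc 0 1) := intervalIntegral.continuousOn_primitive hintIcc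
  have hFintIcc : IntegrableOn F (Set.Icc 0 1) := hFcont.integrableOn_Icc
  have hFint : Integrable F μ := by
    have := hFintIcc.mono_set Set.Ioc_subset_Icc_self
    rwa [IntegrableOn] at this
  have hg_eq : ∀ x ∈ Set.Icc (0:ℝ) 1, g x = g 0 + F x := by
    intro x hx
    rw [hftc x hx, intervalIntegral.integral_of_le hx.1]
  -- kernel representation of F
  have hFker : ∀ x ∈ Set.Icc (0:ℝ) 1,
      F x = ∫ t, (Set.Iic x).indicator g' t ∂μ := by
    intro x hx
    rw [hμdef, setIntegral_indicator measurableSet_Iic, Set.Ioc_inter_Iic,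
      inf_eq_right.mpr hx.2]
  -- Fubini: mean of F equals ∫ g'(t)(1-t)
  have hone : Integrable (fun _ : ℝ => (1:ℝ)) μ := by
    rw [hμdef]
    exact integrableOn_const (by simp [Real.volume_Ioc])
  set H : ℝ × ℝ → ℝ := fun z => if z.2 ≤ z.1 then g' z.2 else 0 with hHdef
  have hS : MeasurableSet {z : ℝ × ℝ | z.2 ≤ z.1} :=
    measurableSet_le measurable_snd measurable_fst
  have hHm : AEStronglyMeasurable H (μ.prod μ) := by
    have : H = ({z : ℝ × ℝ | z.2 ≤ z.1}).indicator (fun z => g' z.2) := by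
      funext z
      by_cases hz : z.2 ≤ z.1 <;> simp [hHdef, hz, Set.indicator_apply]
    rw [this]
    exact (hg'm.comp_snd).indicator hS
  have hHbd : Integrable (fun z : ℝ × ℝ => |g' z.2|) (μ.prod μ) := by
    have := hone.mul_prod hint'.abs
    simpa using this
  have hHint : Integrable H (μ.prod μ) := by
    refine Integrable.mono' hHbd hHm (Filter.Eventually.of_forall fun z => ?_)
    by_cases hz : z.2 ≤ z.1 <;> simp [hHdef, hz, abs_nonneg]
  have hswap : ∫ u, (∫ t, H (u, t) ∂μ) ∂μ = ∫ t, (∫ u, H (u, t) ∂μ) ∂μ :=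
    integral_integral_swap hHint
  have hmean : ∫ u, F u ∂μ = ∫ t, g' t * (1 - t) ∂μ := by
    have e1 : ∫ u, F u ∂μ = ∫ u, (∫ t, H (u, t) ∂μ) ∂μ := by
      rw [hμdef]
      refine setIntegral_congr_fun measurableSet_Ioc fun u hu => ?_
      rw [hFker u (Set.Ioc_subset_Icc_self hu)]
      refine integral_congr_ae (Filter.Eventually.of_forall fun t => ?_)
      by_cases h : t ≤ u <;> simp [hHdef, h, Set.indicator_apply]
    rw [e1, hswap, hμdef]
    refine setIntegral_congr_fun measurableSet_Ioc fun t ht => ?_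
    have e2 : (fun u => H (u, t)) = fun u => g' t * (Set.Ici t).indicator (fun _ => (1:ℝ)) u := by
      funext u
      by_cases h : t ≤ u <;> simp [hHdef, h, Set.indicator_apply]
    rw [e2, MeasureTheory.integral_const_mul,
      setIntegral_indicator measurableSet_Ici]
    have hset : Set.Ioc (0:ℝ) 1 ∩ Set.Ici t = Set.Icc t 1 := by
      ext u
      simp only [Set.mem_inter_iff, Set.mem_Ioc, Set.mem_Ici, Set.mem_Icc]
      constructor
      · rintro ⟨⟨_, h2⟩, h3⟩; exact ⟨h3, h2⟩
      · rintro ⟨h1, h2⟩; exact ⟨⟨lt_of_lt_of_le ht.1 h1, h2⟩, h1⟩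
    rw [hset]
    simp only [MeasureTheory.setIntegral_const, smul_eq_mul, mul_one, Real.volume_Icc]
    rw [Real.volume_real_Icc_of_le ht.2]
  -- value of the mean of g
  have hc1 : (∫ t in (0:ℝ)..1, g t) = g 0 + ∫ u, F u ∂μ := by
    rw [intervalIntegral.integral_of_le zero_le_one, ← hμdef]
    have : ∫ t, g t ∂μ = ∫ t, (g 0 + F t) ∂μ := by
      rw [hμdef]
      exact setIntegral_congr_fun measurableSet_Ioc fun t htm =>
        hg_eq t (Set.Ioc_subset_Icc_self htm)
    have hg0 : Integrable (fun _ : ℝ => g 0) μ := by simpa using hone.const_mul (g 0)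
    rw [this, integral_add hg0 hFint]
    congr 1
    rw [hμdef]
    simp [Real.volume_Ioc]
  -- the kernel
  set K : ℝ → ℝ → ℝ := fun x t => (Set.Iic x).indicator (fun _ => (1:ℝ)) t - (1 - t) with hKdef
  have hKa : ∀ x : ℝ, Integrable (fun t => g' t * (Set.Iic x).indicator (fun _ => (1:ℝ)) t) μ := by
    intro x
    refine Integrable.congr (f := (Set.Iic x).indicator g')
      (hint'.indicator measurableSet_Iic) (Filter.Eventually.of_forall fun t => ?_)
    by_cases h : t ≤ x <;> simp [h, Set.indicator_apply]
  have hKb : Integrable (fun t => g' t * (1 - t)) μ := by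
    refine Integrable.mono' hint'.abs
      (hg'm.mul (Continuous.aestronglyMeasurable (continuous_const.sub continuous_id))) ?_
    filter_upwards [ae_restrict_mem measurableSet_Ioc] with t ht
    have h1 : |1 - t| ≤ 1 := abs_le.mpr ⟨by linarith [ht.2], by linarith [ht.1]⟩
    calc ‖g' t * (1 - t)‖ = |g' t| * |1 - t| := by rw [Real.norm_eq_abs, abs_mul]
      _ ≤ |g' t| * 1 := mul_le_mul_of_nonneg_left h1 (abs_nonneg _)
      _ = |g' t| := mul_one _
  have hKint : ∀ x : ℝ, Integrable (fun t => g' t * K x t) μ := by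
    intro x
    refine ((hKa x).sub hKb).congr (Filter.Eventually.of_forall fun t => ?_)
    simp only [Pi.sub_apply, hKdef]
    ring
  have hKabs : ∀ x : ℝ, ∀ t ∈ Set.Ioc (0:ℝ) 1, |K x t| ≤ 1 := by
    intro x t ht
    by_cases h : t ≤ x <;>
      · simp only [hKdef, Set.indicator_apply, Set.mem_Iic, h, if_true, if_false]
        rw [abs_le]
        constructor <;> [skip; skip] <;> simp <;> linarith [ht.1, ht.2]
  have hK2int : ∀ x : ℝ, Integrable (fun t => (K x t) ^ 2) μ := by
    intro x
    have hm : Measurable (K x) := by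
      simp only [hKdef]
      exact (measurable_const.indicator measurableSet_Iic).sub
        (measurable_const.sub measurable_id)
    refine Integrable.mono' hone ((hm.pow_const 2).aestronglyMeasurable) ?_
    filter_upwards [ae_restrict_mem measurableSet_Ioc] with t ht
    have h1 := hKabs x t ht
    rw [Real.norm_eq_abs, abs_of_nonneg (sq_nonneg _)]
    nlinarith [abs_nonneg (K x t), sq_abs (K x t)]
  -- kernel representation
  have hrep : ∀ x ∈ Set.Icc (0:ℝ) 1,
      g x - (∫ t in (0:ℝ)..1, g t) = ∫ t, g' t * K x t ∂μ := by
    intro x hx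
    have e3 : ∫ t, g' t * K x t ∂μ
        = (∫ t, g' t * (Set.Iic x).indicator (fun _ => (1:ℝ)) t ∂μ)
          - ∫ t, g' t * (1 - t) ∂μ := by
      rw [← integral_sub (hKa x) hKb]
      refine integral_congr_ae (Filter.Eventually.of_forall fun t => ?_)
      simp only [hKdef]
      ring
    have e4 : ∫ t, g' t * (Set.Iic x).indicator (fun _ => (1:ℝ)) t ∂μ = F x := by
      rw [hFker x hx]
      refine integral_congr_ae (Filter.Eventually.of_forall fun t => ?_)
      by_cases h : t ≤ x <;> simp [h, Set.indicator_apply]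
    rw [hg_eq x hx, hc1, e3, e4, ← hmean]
    ring
  -- value of the kernel's second moment
  have hK2val : ∀ x ∈ Set.Icc (0:ℝ) 1,
      ∫ t, (K x t) ^ 2 ∂μ = (x ^ 3 + (1 - x) ^ 3) / 3 := by
    intro x hx
    have i1 : IntegrableOn (fun t => (K x t) ^ 2) (Set.Ioc 0 x) volume := by
      refine IntegrableOn.congr_fun ((continuous_pow 2).integrableOn_Ioc) ?_ measurableSet_Ioc
      intro t htm
      have hK : K x t = t := by
        simp only [hKdef, Set.indicator_apply, Set.mem_Iic, htm.2, if_true]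
        ring
      simp [hK]
    have i2 : IntegrableOn (fun t => (K x t) ^ 2) (Set.Ioc x 1) volume := by
      have cont2 : Continuous fun t : ℝ => (1 - t) ^ 2 := by fun_prop
      refine IntegrableOn.congr_fun (f := fun t : ℝ => (1 - t) ^ 2)
        cont2.integrableOn_Ioc ?_ measurableSet_Ioc
      intro t htm
      have hK : K x t = -(1 - t) := by
        simp only [hKdef, Set.indicator_apply, Set.mem_Iic, not_le.mpr htm.1, if_false]
        ring
      simp only [hK]
      ring
    have hsplit : ∫ t, (K x t) ^ 2 ∂μ
        = (∫ t in Set.Ioc 0 x, (K x t) ^ 2) + ∫ t in Set.Ioc x 1, (K x t) ^ 2 := by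
      rw [hμdef, ← Set.Ioc_union_Ioc_eq_Ioc hx.1 hx.2,
        setIntegral_union (Set.Ioc_disjoint_Ioc_of_le le_rfl) measurableSet_Ioc i1 i2]
    have e1 : (∫ t in Set.Ioc 0 x, (K x t) ^ 2) = x ^ 3 / 3 := by
      have : (∫ t in Set.Ioc 0 x, (K x t) ^ 2) = ∫ t in Set.Ioc 0 x, t ^ 2 := by
        refine setIntegral_congr_fun measurableSet_Ioc fun t htm => ?_
        have hK : K x t = t := by
          simp only [hKdef, Set.indicator_apply, Set.mem_Iic, htm.2, if_true]
          ring
        simp [hK]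
      rw [this, ← intervalIntegral.integral_of_le hx.1, integral_pow]
      norm_num
    have e2 : (∫ t in Set.Ioc x 1, (K x t) ^ 2) = (1 - x) ^ 3 / 3 := by
      have h0 : (∫ t in Set.Ioc x 1, (K x t) ^ 2) = ∫ t in Set.Ioc x 1, (1 - t) ^ 2 := by
        refine setIntegral_congr_fun measurableSet_Ioc fun t htm => ?_
        have hK : K x t = -(1 - t) := by
          simp only [hKdef, Set.indicator_apply, Set.mem_Iic, not_le.mpr htm.1, if_false]
          ring
        simp only [hK]
        ring
      rw [h0, ← intervalIntegral.integral_of_le hx.2,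
        intervalIntegral.integral_comp_sub_left (fun s => s ^ 2) 1]
      simp only [sub_self, sub_zero]
      rw [integral_pow]
      norm_num
    rw [hsplit, e1, e2]
    ring
  -- pointwise Cauchy-Schwarz bound
  have hsqμ : Integrable (fun t => g' t ^ 2) μ := hsq'
  have hCS : ∀ x ∈ Set.Icc (0:ℝ) 1,
      (g x - ∫ t in (0:ℝ)..1, g t) ^ 2 ≤ C * ((x ^ 3 + (1 - x) ^ 3) / 3) := by
    intro x hx
    rw [hrep x hx]
    have := cs_integral g' (K x) (hKint x) hsqμ (hK2int x)
    rw [hK2val x hx] at this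
    exact this
  -- integrate the bound
  have hRHSint : Integrable (fun x : ℝ => C * ((x ^ 3 + (1 - x) ^ 3) / 3)) μ := by
    rw [hμdef]
    have contR : Continuous fun x : ℝ => C * ((x ^ 3 + (1 - x) ^ 3) / 3) := by fun_prop
    exact contR.integrableOn_Ioc
  have hfin : ∫ x, (g x - ∫ t in (0:ℝ)..1, g t) ^ 2 ∂μ
      ≤ ∫ x, C * ((x ^ 3 + (1 - x) ^ 3) / 3) ∂μ := by
    refine integral_mono_of_nonneg (Filter.Eventually.of_forall fun x => sq_nonneg _)
      hRHSint ?_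
    filter_upwards [ae_restrict_mem measurableSet_Ioc] with x hxm
    exact hCS x (Set.Ioc_subset_Icc_self hxm)
  have hRHSval : ∫ x, C * ((x ^ 3 + (1 - x) ^ 3) / 3) ∂μ = C * (1 / 6) := by
    rw [MeasureTheory.integral_const_mul]
    congr 1
    rw [hμdef, ← intervalIntegral.integral_of_le zero_le_one]
    have hpoly : (∫ x in (0:ℝ)..1, (x ^ 3 + (1 - x) ^ 3) / 3)
        = ((∫ x in (0:ℝ)..1, x ^ 3) + ∫ x in (0:ℝ)..1, (1 - x) ^ 3) / 3 := by
      have c3 : Continuous fun x : ℝ => (1 - x) ^ 3 := by fun_prop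
      rw [intervalIntegral.integral_div, intervalIntegral.integral_add
        ((continuous_pow 3).intervalIntegrable _ _) (c3.intervalIntegrable _ _)]
    rw [hpoly, intervalIntegral.integral_comp_sub_left (fun s => s ^ 3) 1]
    simp only [sub_self, sub_zero]
    rw [integral_pow]
    norm_num
  have hCeq : (∫ t in (0:ℝ)..1, g' t ^ 2) = C := by
    rw [intervalIntegral.integral_of_le zero_le_one]
  have hL : (∫ x in (0:ℝ)..1, (g x - ∫ t in (0:ℝ)..1, g t) ^ 2)
      = ∫ x, (g x - ∫ t in (0:ℝ)..1, g t) ^ 2 ∂μ := by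
    rw [intervalIntegral.integral_of_le zero_le_one, hμdef]
  rw [hL, hCeq]
  rw [hRHSval] at hfin
  linarith
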